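/- Let M = (S, A, P, R, γ) be a finite discounted MDP with rewards in [0,1], g : A → G a grouping function, π^i a lower-level policy, and M_G the associated grouped MDP. Then for every higher-level policy π^o and every state s, V_M^{π^o∘π^i}(s) = V_{M_G}^{π^o}(s). -/
import Mathlib


open scoped BigOperators Classical

namespace MDPGroup

variable {S A G : Type*}

/-- `P` is a transition kernel: `P s a ·` is a probability distribution on states. -/
structure IsKernel [Fintype S] (P : S → A → S → ℝ) : Prop where
  nonneg : ∀ s a s', 0 ≤ P s a s'
  sum_one : ∀ s a, ∑ s', P s a s' = 1

/-- `π` is a stationary randomized policy. -/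
structure IsPolicy [Fintype A] (π : S → A → ℝ) : Prop where
  nonneg : ∀ s a, 0 ≤ π s a
  sum_one : ∀ s, ∑ a, π s a = 1

/-- `Q` satisfies the Bellman equation for policy `π`. -/
def IsBellman [Fintype S] [Fintype A] (P : S → A → S → ℝ) (R : S → A → ℝ) (γ : ℝ)
    (π : S → A → ℝ) (Q : S → A → ℝ) : Prop :=
  ∀ s a, Q s a = R s a + γ * ∑ s', P s a s' * ∑ a', π s' a' * Q s' a'

/-- The action-value function of policy `π` (the unique solution of the Bellman equation,
when it exists). -/
noncomputable def Qpi [Fintype S] [Fintype A] (P : S → A → S → ℝ) (R : S → A → ℝ)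
    (γ : ℝ) (π : S → A → ℝ) : S → A → ℝ :=
  if h : ∃ Q : S → A → ℝ, IsBellman P R γ π Q then h.choose else 0

/-- The state-value function of policy `π`. -/
noncomputable def Vpi [Fintype S] [Fintype A] (P : S → A → S → ℝ) (R : S → A → ℝ)
    (γ : ℝ) (π : S → A → ℝ) : S → ℝ :=
  fun s => ∑ a, π s a * Qpi P R γ π s a

/-- The optimal state-value function. -/
noncomputable def Vstar [Fintype S] [Fintype A] (P : S → A → S → ℝ) (R : S → A → ℝ)
    (γ : ℝ) : S → ℝ :=
  fun s => ⨆ π : {π : S → A → ℝ // IsPolicy π}, Vpi P R γ π.1 s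

/-- The optimal action-value function. -/
noncomputable def Qstar [Fintype S] [Fintype A] (P : S → A → S → ℝ) (R : S → A → ℝ)
    (γ : ℝ) : S → A → ℝ :=
  fun s a => ⨆ π : {π : S → A → ℝ // IsPolicy π}, Qpi P R γ π.1 s a

/-- Supremum norm of a function on a (finite) index type. -/
noncomputable def supNorm {ι : Type*} (f : ι → ℝ) : ℝ := ⨆ i, |f i|

/-- A lower-level policy, selecting an action within each group. -/
structure IsLower [Fintype A] (g : A → G) (πi : G → A → ℝ) : Prop where
  nonneg : ∀ h a, 0 ≤ πi h a
  sum_one : ∀ h, ∑ a, πi h a = 1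
  support : ∀ h a, g a ≠ h → πi h a = 0

/-- The composed policy `π^o ∘ π^i`. -/
def compose (g : A → G) (πi : G → A → ℝ) (πo : S → G → ℝ) : S → A → ℝ :=
  fun s a => πo s (g a) * πi (g a) a

/-- Grouped transition kernel. -/
noncomputable def PG [Fintype A] (P : S → A → S → ℝ) (πi : G → A → ℝ) : S → G → S → ℝ :=
  fun s h s' => ∑ a, πi h a * P s a s'

/-- Grouped reward. -/
noncomputable def RG [Fintype A] (R : S → A → ℝ) (πi : G → A → ℝ) : S → G → ℝ :=
  fun s h => ∑ a, πi h a * R s a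

/-- The optimal transition deviation factor `β_P^*(g)`. -/
noncomputable def betaPstar [Fintype S] (P : S → A → S → ℝ) (g : A → G) : ℝ :=
  ⨆ p : S × G, (1 - ∑ s', ⨅ a : {a : A // g a = p.2}, P p.1 a.1 s')

/-- The optimal reward deviation factor `β_R^*(g)`. -/
noncomputable def betaRstar (R : S → A → ℝ) (g : A → G) : ℝ :=
  ⨆ q : {q : S × A × A // g q.2.1 = g q.2.2}, (R q.1.1 q.1.2.1 - R q.1.1 q.1.2.2)



/-- Uniqueness of Bellman solutions for `γ < 1`. -/
lemma bellman_unique {S B : Type*} [Fintype S] [Fintype B] [Nonempty S] [Nonempty B]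
    {P : S → B → S → ℝ} (hP : IsKernel P) {R : S → B → ℝ} {γ : ℝ}
    (hγ0 : 0 ≤ γ) (hγ1 : γ < 1) {π : S → B → ℝ} (hπ : IsPolicy π)
    {Q1 Q2 : S → B → ℝ} (h1 : IsBellman P R γ π Q1) (h2 : IsBellman P R γ π Q2) :
    Q1 = Q2 := by
  obtain ⟨p, -, hmax⟩ := Finset.exists_max_image (Finset.univ : Finset (S × B))
    (fun p => |Q1 p.1 p.2 - Q2 p.1 p.2|) ⟨Classical.ofNonempty, Finset.mem_univ _⟩
  set m := |Q1 p.1 p.2 - Q2 p.1 p.2| with hm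
  have hmle : ∀ s a, |Q1 s a - Q2 s a| ≤ m := fun s a => hmax (s, a) (Finset.mem_univ _)
  have hm0 : 0 ≤ m := abs_nonneg _
  have inner_le : ∀ s' : S, |∑ a', π s' a' * Q1 s' a' - ∑ a', π s' a' * Q2 s' a'| ≤ m := by
    intro s'
    rw [← Finset.sum_sub_distrib]
    calc |∑ a', (π s' a' * Q1 s' a' - π s' a' * Q2 s' a')|
        ≤ ∑ a', |π s' a' * Q1 s' a' - π s' a' * Q2 s' a'| := Finset.abs_sum_le_sum_abs _ _
      _ = ∑ a', π s' a' * |Q1 s' a' - Q2 s' a'| := by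
          refine Finset.sum_congr rfl fun a' _ => ?_
          rw [← mul_sub, abs_mul, abs_of_nonneg (hπ.nonneg s' a')]
      _ ≤ ∑ a', π s' a' * m := by
          refine Finset.sum_le_sum fun a' _ => ?_
          exact mul_le_mul_of_nonneg_left (hmle _ _) (hπ.nonneg s' a')
      _ = m := by rw [← Finset.sum_mul, hπ.sum_one, one_mul]
  have key : ∀ s a, |Q1 s a - Q2 s a| ≤ γ * m := by
    intro s a
    rw [h1 s a, h2 s a]
    have : R s a + γ * ∑ s', P s a s' * ∑ a', π s' a' * Q1 s' a'
        - (R s a + γ * ∑ s', P s a s' * ∑ a', π s' a' * Q2 s' a')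
        = γ * ∑ s', P s a s' * (∑ a', π s' a' * Q1 s' a' - ∑ a', π s' a' * Q2 s' a') := by
      simp only [mul_sub, Finset.sum_sub_distrib]
      ring
    rw [this, abs_mul, abs_of_nonneg hγ0]
    refine mul_le_mul_of_nonneg_left ?_ hγ0
    calc |∑ s', P s a s' * (∑ a', π s' a' * Q1 s' a' - ∑ a', π s' a' * Q2 s' a')|
        ≤ ∑ s', |P s a s' * (∑ a', π s' a' * Q1 s' a' - ∑ a', π s' a' * Q2 s' a')| :=
          Finset.abs_sum_le_sum_abs _ _
      _ ≤ ∑ s', P s a s' * m := by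
          refine Finset.sum_le_sum fun s' _ => ?_
          rw [abs_mul, abs_of_nonneg (hP.nonneg s a s')]
          exact mul_le_mul_of_nonneg_left (inner_le s') (hP.nonneg s a s')
      _ = m := by rw [← Finset.sum_mul, hP.sum_one, one_mul]
  have : m ≤ γ * m := key p.1 p.2
  have hm_zero : m = 0 := by nlinarith
  funext s a
  have := hmle s a
  rw [hm_zero] at this
  have := abs_nonpos_iff.mp (le_trans this (le_refl 0))
  linarith [sub_eq_zero.mp this, (sub_eq_zero.mp this : Q1 s a = Q2 s a)]

lemma Qpi_eq {S B : Type*} [Fintype S] [Fintype B] [Nonempty S] [Nonempty B]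
    {P : S → B → S → ℝ} (hP : IsKernel P) {R : S → B → ℝ} {γ : ℝ}
    (hγ0 : 0 ≤ γ) (hγ1 : γ < 1) {π : S → B → ℝ} (hπ : IsPolicy π)
    {Q : S → B → ℝ} (hQ : IsBellman P R γ π Q) :
    Qpi P R γ π = Q := by
  have hE : ∃ Q' : S → B → ℝ, IsBellman P R γ π Q' := ⟨Q, hQ⟩
  unfold Qpi
  rw [dif_pos hE]
  exact bellman_unique hP hγ0 hγ1 hπ hE.choose_spec hQ

lemma regroup {A G : Type*} [Fintype A] [Fintype G] {g : A → G} {πi : G → A → ℝ}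
    (hπi : IsLower g πi) (c : G → ℝ) (f : A → ℝ) :
    ∑ h, c h * ∑ a, πi h a * f a = ∑ a, c (g a) * (πi (g a) a * f a) := by
  simp only [Finset.mul_sum]
  rw [Finset.sum_comm]
  refine Finset.sum_congr rfl fun a _ => ?_
  refine Finset.sum_eq_single (g a) (fun h _ hne => ?_) (fun h => absurd (Finset.mem_univ _) h)
  rw [hπi.support h a (fun e => hne e.symm)]
  ring

lemma group_step {S A G : Type*} [Fintype S] [Fintype A] [Fintype G]
    {P : S → A → S → ℝ} {R : S → A → ℝ} {γ : ℝ} {πi : G → A → ℝ}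
    (W : S → ℝ) (s : S) (h : G) :
    ∑ a, πi h a * (R s a + γ * ∑ s', P s a s' * W s')
      = RG R πi s h + γ * ∑ s', PG P πi s h s' * W s' := by
  simp only [mul_add, Finset.sum_add_distrib, RG, PG, Finset.mul_sum, Finset.sum_mul]
  congr 1
  rw [Finset.sum_comm]
  refine Finset.sum_congr rfl fun a _ => ?_
  refine Finset.sum_congr rfl fun s' _ => ?_
  ring

theorem statement_14 {S A G : Type*} [Fintype S] [Fintype A] [Fintype G]
    [Nonempty S] [Nonempty A]
    (P : S → A → S → ℝ) (R : S → A → ℝ) (γ : ℝ)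
    (hP : IsKernel P) (hR : ∀ s a, 0 ≤ R s a ∧ R s a ≤ 1)
    (hγ0 : 0 ≤ γ) (hγ1 : γ < 1)
    (g : A → G) (hg : Function.Surjective g)
    (πi : G → A → ℝ) (hπi : IsLower g πi)
    (πo : S → G → ℝ) (hπo : IsPolicy πo) :
    ∀ s, Vpi P R γ (compose g πi πo) s = Vpi (PG P πi) (RG R πi) γ πo s := by
  have hG : Nonempty G := ⟨g Classical.ofNonempty⟩
  set π := compose g πi πo with hπdef
  have hπ : IsPolicy π := by
    constructor
    · exact fun s a => mul_nonneg (hπo.nonneg _ _) (hπi.nonneg _ _)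
    · intro s
      calc ∑ a, π s a = ∑ a, πo s (g a) * (πi (g a) a * 1) := by
            simp [hπdef, compose]
        _ = ∑ h, πo s h * ∑ a, πi h a * 1 := (regroup hπi _ _).symm
        _ = 1 := by simp only [mul_one, hπi.sum_one, hπo.sum_one]
  have hPG : IsKernel (PG P πi) := by
    constructor
    · exact fun s h s' => Finset.sum_nonneg fun a _ =>
        mul_nonneg (hπi.nonneg _ _) (hP.nonneg _ _ _)
    · intro s h
      unfold PG
      rw [Finset.sum_comm]
      simp only [← Finset.mul_sum, hP.sum_one, mul_one, hπi.sum_one]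
  intro s
  by_cases hE : ∃ Q : S → A → ℝ, IsBellman P R γ π Q
  · obtain ⟨Q, hQ⟩ := hE
    have hQpi : Qpi P R γ π = Q := Qpi_eq hP hγ0 hγ1 hπ hQ
    set QG : S → G → ℝ := fun s h => ∑ a, πi h a * Q s a with hQGdef
    have hV : ∀ s', ∑ h', πo s' h' * QG s' h' = ∑ a', π s' a' * Q s' a' := by
      intro s'
      rw [hQGdef]
      calc ∑ h', πo s' h' * ∑ a, πi h' a * Q s' a
          = ∑ a, πo s' (g a) * (πi (g a) a * Q s' a) := regroup hπi _ _
        _ = ∑ a, π s' a * Q s' a := by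
            refine Finset.sum_congr rfl fun a _ => ?_
            simp [hπdef, compose, mul_assoc]
    have hQG : IsBellman (PG P πi) (RG R πi) γ πo QG := by
      intro s h
      calc QG s h
          = ∑ a, πi h a * (R s a + γ * ∑ s', P s a s' * ∑ a', π s' a' * Q s' a') := by
            refine Finset.sum_congr rfl fun a _ => ?_
            rw [← hQ s a]
        _ = RG R πi s h + γ * ∑ s', PG P πi s h s' * ∑ a', π s' a' * Q s' a' :=
            group_step _ s h
        _ = RG R πi s h + γ * ∑ s', PG P πi s h s' * ∑ h', πo s' h' * QG s' h' := by
            congr 1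
            rw [Finset.mul_sum, Finset.mul_sum]
            refine Finset.sum_congr rfl fun s' _ => ?_
            rw [hV s']
    have hQpiG : Qpi (PG P πi) (RG R πi) γ πo = QG := Qpi_eq hPG hγ0 hγ1 hπo hQG
    unfold Vpi
    rw [hQpi, hQpiG]
    exact (hV s).symm
  · have hEG : ¬ ∃ QG : S → G → ℝ, IsBellman (PG P πi) (RG R πi) γ πo QG := by
      rintro ⟨QG, hQG⟩
      apply hE
      set W : S → ℝ := fun s => ∑ h, πo s h * QG s h with hWdef
      refine ⟨fun s a => R s a + γ * ∑ s', P s a s' * W s', ?_⟩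
      have hW : ∀ s, ∑ a, π s a * (R s a + γ * ∑ s', P s a s' * W s') = W s := by
        intro s
        calc ∑ a, π s a * (R s a + γ * ∑ s', P s a s' * W s')
            = ∑ a, πo s (g a) * (πi (g a) a * (R s a + γ * ∑ s', P s a s' * W s')) := by
              refine Finset.sum_congr rfl fun a _ => ?_
              simp [hπdef, compose, mul_assoc]
          _ = ∑ h, πo s h * ∑ a, πi h a * (R s a + γ * ∑ s', P s a s' * W s') :=
              (regroup hπi _ _).symm
          _ = ∑ h, πo s h * QG s h := by
              refine Finset.sum_congr rfl fun h _ => ?_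
              rw [group_step, ← hQG s h]
          _ = W s := rfl
      intro s a
      simp only
      congr 1
      rw [Finset.mul_sum, Finset.mul_sum]
      refine Finset.sum_congr rfl fun s' _ => ?_
      rw [hW s']
    unfold Vpi Qpi
    rw [dif_neg hE, dif_neg hEG]
    simp

end MDPGroup
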